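/- Let K be a field of characteristic ≠ 2, let E be an n-dimensional K-vector space with a quadratic form q whose associated bilinear form is b(x,y) = q(x+y) − q(x) − q(y), and let (e₁,…,eₙ) be a basis of E that is orthogonal for q, i.e. b(e_j,e_l) = 0 whenever j ≠ l. Then the family of products ι(e_{j₁})·ι(e_{j₂})·…·ι(e_{j_k}), indexed by all strictly increasing tuples 1 ≤ j₁ < j₂ < … < j_k ≤ n (including the empty product 1), is a basis of the Clifford algebra C(E,q) as a K-vector space. -/

import Mathlib

open CliffordAlgebra

section Aux

variable {K : Type*} [Field K] {E : Type*} [AddCommGroup E] [Module K E]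
variable {n : ℕ} (e : Module.Basis (Fin n) K E) (q : QuadraticForm K E)

/-- The product of `ι q (e i)` over a list of indices. -/
private noncomputable def cbPl (l : List (Fin n)) : CliffordAlgebra q :=
  (l.map fun i => ι q (e i)).prod

@[simp] private theorem cbPl_nil : cbPl e q [] = 1 := rfl

@[simp] private theorem cbPl_cons (j : Fin n) (l : List (Fin n)) :
    cbPl e q (j :: l) = ι q (e j) * cbPl e q l := by
  simp [cbPl]

/-- Iterated contraction by the dual-basis functionals along a list of indices
(the head is contracted first). -/
private noncomputable def cbPhi : List (Fin n) → CliffordAlgebra q →ₗ[K] CliffordAlgebra q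
  | [] => LinearMap.id
  | j :: m => (cbPhi m).comp (contractLeft (e.coord j))

@[simp] private theorem cbPhi_nil (x : CliffordAlgebra q) : cbPhi e q [] x = x := rfl

@[simp] private theorem cbPhi_cons (j : Fin n) (m : List (Fin n)) (x : CliffordAlgebra q) :
    cbPhi e q (j :: m) x = cbPhi e q m (contractLeft (e.coord j) x) := rfl

private theorem coord_basis (i j : Fin n) :
    e.coord i (e j) = if j = i then (1 : K) else 0 := by
  rw [Module.Basis.coord_apply, Module.Basis.repr_self, Finsupp.single_apply]

private theorem contract_cbPl (i : Fin n) :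
    ∀ (l : List (Fin n)), l.Nodup →
      contractLeft (e.coord i) (cbPl e q l)
        = (if i ∈ l then ((-1 : K) ^ (l.idxOf i)) else 0) • cbPl e q (l.erase i)
  | [], _ => by simp
  | j :: l, hnd => by
    obtain ⟨hj, hl⟩ := List.nodup_cons.mp hnd
    rw [cbPl_cons, contractLeft_ι_mul, contract_cbPl i l hl]
    by_cases hij : i = j
    · subst hij
      have hnotmem : i ∉ l := hj
      rw [coord_basis, if_pos rfl, if_neg hnotmem, zero_smul, mul_zero, sub_zero,
        List.erase_cons_head, if_pos List.mem_cons_self, List.idxOf_cons_self,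
        pow_zero, one_smul]
    · have h1 : e.coord i (e j) = 0 := by rw [coord_basis, if_neg (Ne.symm hij)]
      rw [h1, zero_smul, zero_sub, List.erase_cons_tail (by simpa using Ne.symm hij), cbPl_cons,
        List.idxOf_cons_ne _ (by simpa using Ne.symm hij)]
      have hmem : (i ∈ j :: l) ↔ (i ∈ l) := by simp [List.mem_cons, hij]
      by_cases him : i ∈ l
      · rw [if_pos him, if_pos (hmem.mpr him), mul_smul_comm, ← neg_smul, pow_succ, mul_neg_one]
      · rw [if_neg him, if_neg (fun h => him (hmem.mp h)), zero_smul, mul_zero, neg_zero,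
          zero_smul]

private theorem cbPhi_cbPl_of_not_subset :
    ∀ (m l : List (Fin n)), l.Nodup → ¬ m ⊆ l → cbPhi e q m (cbPl e q l) = 0
  | [], l, _, hns => absurd (List.nil_subset l) hns
  | j :: m, l, hl, hns => by
    rw [cbPhi_cons, contract_cbPl e q j l hl]
    by_cases hjl : j ∈ l
    · rw [if_pos hjl, map_smul,
        cbPhi_cbPl_of_not_subset m (l.erase j) (hl.erase j) ?_, smul_zero]
      intro hsub
      apply hns
      intro a ha
      rcases List.mem_cons.mp ha with rfl | ha
      · exact hjl
      · exact List.erase_subset (hsub ha)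
    · rw [if_neg hjl, zero_smul, map_zero]

private theorem cbPhi_cbPl_self :
    ∀ (l : List (Fin n)), l.Nodup → cbPhi e q l (cbPl e q l) = 1
  | [], _ => by simp
  | j :: l, hnd => by
    obtain ⟨hj, hl⟩ := List.nodup_cons.mp hnd
    rw [cbPhi_cons, contract_cbPl e q j _ hnd, if_pos List.mem_cons_self,
      List.idxOf_cons_self, pow_zero, one_smul, List.erase_cons_head,
      cbPhi_cbPl_self l hl]

private theorem iota_mul_cbPl
    (horth : ∀ j l : Fin n, j ≠ l → QuadraticMap.polar q (e j) (e l) = 0) (i : Fin n) :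
    ∀ (l : List (Fin n)), l.Pairwise (· < ·) →
      ∃ (c : K) (l₂ : List (Fin n)), l₂.Pairwise (· < ·) ∧ (∀ x ∈ l₂, x = i ∨ x ∈ l) ∧
        ι q (e i) * cbPl e q l = c • cbPl e q l₂
  | [], _ => ⟨1, [i], List.pairwise_singleton _ i, by simp, by simp⟩
  | j :: l, hs => by
    obtain ⟨hjl, hsl⟩ := List.pairwise_cons.mp hs
    rcases lt_trichotomy i j with h | h | h
    · refine ⟨1, i :: j :: l, List.pairwise_cons.mpr ⟨?_, hs⟩, ?_, by simp⟩
      · intro b hb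
        rcases List.mem_cons.mp hb with rfl | hb
        · exact h
        · exact h.trans (hjl b hb)
      · intro x hx
        rcases List.mem_cons.mp hx with rfl | hx
        · exact Or.inl rfl
        · exact Or.inr hx
    · subst h
      refine ⟨q (e i), l, hsl, fun x hx => Or.inr (List.mem_cons_of_mem _ hx), ?_⟩
      rw [cbPl_cons, ← mul_assoc, ι_sq_scalar, Algebra.smul_def]
    · obtain ⟨c, l₂, hsort, hmem, heq⟩ := iota_mul_cbPl horth i l hsl
      refine ⟨-c, j :: l₂, List.pairwise_cons.mpr ⟨?_, hsort⟩, ?_, ?_⟩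
      · intro b hb
        rcases hmem b hb with rfl | hb
        · exact h
        · exact hjl b hb
      · intro x hx
        rcases List.mem_cons.mp hx with rfl | hx
        · exact Or.inr List.mem_cons_self
        · rcases hmem x hx with rfl | hx'
          · exact Or.inl rfl
          · exact Or.inr (List.mem_cons_of_mem _ hx')
      · have hanti : ι q (e i) * ι q (e j) = -(ι q (e j) * ι q (e i)) := by
          have h2 := ι_mul_ι_add_swap (Q := q) (e i) (e j)
          rw [horth i j (ne_of_gt h), map_zero] at h2
          exact eq_neg_of_add_eq_zero_left h2
        rw [cbPl_cons, cbPl_cons, ← mul_assoc, hanti, neg_mul, mul_assoc, heq,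
          mul_smul_comm, ← neg_smul]

end Aux

/-- If `(e₁, …, eₙ)` is a `q`-orthogonal basis of an `n`-dimensional quadratic space
`(E, q)` over a field `K` of characteristic `≠ 2`, then the ordered products
`ι (e_{j₁}) * ⋯ * ι (e_{j_k})` over strictly increasing tuples
`1 ≤ j₁ < ⋯ < j_k ≤ n` (indexed below by the finite subsets of `Fin n`, the empty
set giving the empty product `1`) form a basis of the Clifford algebra `C(E, q)`. -/
theorem clifford_basis_of_orthogonal_basis
    (K : Type*) [Field K] (hK : ringChar K ≠ 2)
    (E : Type*) [AddCommGroup E] [Module K E]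
    (n : ℕ) (e : Module.Basis (Fin n) K E)
    (q : QuadraticForm K E)
    (horth : ∀ j l : Fin n, j ≠ l → QuadraticMap.polar q (e j) (e l) = 0) :
    ∃ b : Module.Basis (Finset (Fin n)) K (CliffordAlgebra q),
      ∀ s : Finset (Fin n),
        b s = ((s.sort (· ≤ ·)).map fun i => ι q (e i)).prod := by
  classical
  haveI : Invertible (2 : K) := invertibleOfNonzero (Ring.two_ne_zero hK)
  set P : Finset (Fin n) → CliffordAlgebra q := fun s => cbPl e q (s.sort (· ≤ ·)) with hP
  set S : Submodule K (CliffordAlgebra q) := Submodule.span K (Set.range P) with hS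
  -- linear independence
  have hind : LinearIndependent K P := by
    rw [Fintype.linearIndependent_iff]
    intro c hc
    have key : ∀ s : Finset (Fin n), (∀ t, s ⊂ t → c t = 0) → c s = 0 := by
      intro s hsup
      have h0 := congrArg (cbPhi e q (s.sort (· ≤ ·))) hc
      rw [map_zero, map_sum] at h0
      rw [Finset.sum_eq_single s ?_ ?_] at h0
      · rw [map_smul, hP] at h0
        dsimp only at h0
        rw [cbPhi_cbPl_self e q _ (s.sort_nodup _)] at h0
        rcases smul_eq_zero.mp h0 with h | h
        · exact h
        · exact absurd h one_ne_zero
      · intro t _ hts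
        rw [map_smul]
        by_cases hsub : s ⊆ t
        · rw [hsup t (HasSubset.Subset.ssubset_of_ne hsub (Ne.symm hts)), zero_smul]
        · rw [hP]
          dsimp only
          rw [cbPhi_cbPl_of_not_subset e q _ _ (t.sort_nodup _) ?_, smul_zero]
          intro hls
          apply hsub
          intro a ha
          exact Finset.mem_sort (· ≤ ·) |>.mp (hls (Finset.mem_sort (· ≤ ·) |>.mpr ha))
      · intro h
        exact absurd (Finset.mem_univ s) h
    intro s
    have H : ∀ k (s : Finset (Fin n)), n - s.card ≤ k → c s = 0 := by
      intro k
      induction k with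
      | zero =>
        intro s hs
        apply key s
        intro t hst
        have h1 : s.card ≤ n := by simpa using Finset.card_le_univ s
        have h2 : t.card ≤ n := by simpa using Finset.card_le_univ t
        have h3 := Finset.card_lt_card hst
        exact (by omega : False).elim
      | succ k ih =>
        intro s hs
        apply key s
        intro t hst
        apply ih
        have h2 : t.card ≤ n := by simpa using Finset.card_le_univ t
        have h3 := Finset.card_lt_card hst
        omega
    exact H n s (Nat.sub_le _ _)
  -- spanning
  have hspan' : ∀ x : CliffordAlgebra q, x ∈ S := by
    intro x
    induction x using CliffordAlgebra.left_induction with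
    | algebraMap r =>
      have h1 : (1 : CliffordAlgebra q) ∈ S := by
        have hemp : P ∅ = 1 := by simp [hP, Finset.sort_empty]
        exact hemp ▸ Submodule.subset_span ⟨∅, rfl⟩
      simpa [Algebra.algebraMap_eq_smul_one] using S.smul_mem r h1
    | add x y hx hy => exact S.add_mem hx hy
    | ι_mul x m hx =>
      have hgen : ∀ (i : Fin n) (y : CliffordAlgebra q), y ∈ S → ι q (e i) * y ∈ S := by
        intro i y hy
        induction hy using Submodule.span_induction with
        | mem z hz =>
          obtain ⟨t, rfl⟩ := hz
          obtain ⟨cc, l₂, hsort, hmem, heq⟩ :=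
            iota_mul_cbPl e q horth i (t.sort (· ≤ ·)) (t.sortedLT_sort.pairwise)
          rw [hP]
          dsimp only
          rw [heq]
          apply S.smul_mem
          have h2 : cbPl e q l₂ = P l₂.toFinset := by
            rw [hP]
            dsimp only
            congr 1
            exact ((List.toFinset_sort (· ≤ ·) hsort.nodup).mpr
              (hsort.imp (fun h => le_of_lt h))).symm
          rw [h2]
          exact Submodule.subset_span ⟨_, rfl⟩
        | zero => rw [mul_zero]; exact S.zero_mem
        | add a b _ _ ha hb => rw [mul_add]; exact S.add_mem ha hb
        | smul a z _ hz => rw [mul_smul_comm]; exact S.smul_mem a hz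
      have hm : (⊤ : Submodule K E) ≤
          Submodule.comap ((LinearMap.mulRight K x).comp (ι q)) S := by
        rw [← e.span_eq]
        apply Submodule.span_le.mpr
        rintro _ ⟨i, rfl⟩
        exact hgen i x hx
      exact hm Submodule.mem_top
  have hspan : ⊤ ≤ S := fun x _ => hspan' x
  refine ⟨Module.Basis.mk hind hspan, fun s => ?_⟩
  rw [Module.Basis.mk_apply]
  rfl
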